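/- If y² > τ₂*² (with w* ≠ 0, τ₁*², τ₂*² > 0), then the function D₁₂(η) = (1/2)log(ησ_X² + (1−η)σ_Y²) − (η/2)log σ_X² − ((1−η)/2)log τ₁*², where σ_X² = w*²τ₂*² + τ₁*² and σ_Y² = w*²y² + τ₁*², is strictly decreasing on (0,1). -/

import Mathlib

/-- The concentration exponent `D₁₂(η)` for the true model `X(2) → X(1)`
with a fraction `η` of observational samples. -/
noncomputable def D12 (sX sY t1 : ℝ) (η : ℝ) : ℝ :=
  (1 / 2) * Real.log (η * sX + (1 - η) * sY)
    - η / 2 * Real.log sX - (1 - η) / 2 * Real.log t1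

theorem stmt_13 (w τ1 τ2 y : ℝ) (hw : w ≠ 0) (h1 : 0 < τ1) (h2 : 0 < τ2)
    (hy : τ2 < y ^ 2) :
    StrictAntiOn (D12 (w ^ 2 * τ2 + τ1) (w ^ 2 * y ^ 2 + τ1) τ1)
      (Set.Ioo (0 : ℝ) 1) := by
  set sX := w ^ 2 * τ2 + τ1 with hsXdef
  set sY := w ^ 2 * y ^ 2 + τ1 with hsYdef
  have hw2 : 0 < w ^ 2 := by positivity
  have hsX : τ1 < sX := by nlinarith
  have hsXpos : 0 < sX := lt_trans h1 hsX
  have hsY : sX < sY := by nlinarith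
  have hsYpos : 0 < sY := lt_trans hsXpos hsY
  have hm : ∀ x ∈ Set.Ioo (0:ℝ) 1, 0 < x * sX + (1 - x) * sY := by
    intro x hx
    obtain ⟨hx0, hx1⟩ := hx
    nlinarith
  have hderiv : ∀ x ∈ Set.Ioo (0:ℝ) 1,
      HasDerivAt (D12 sX sY τ1)
        ((1/2) * ((sX - sY) / (x * sX + (1 - x) * sY))
          - Real.log sX / 2 - (-1) / 2 * Real.log τ1) x := by
    intro x hx
    have hlin : HasDerivAt (fun η : ℝ => η * sX + (1 - η) * sY) (sX - sY) x := by
      have := ((hasDerivAt_id x).mul_const sX).add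
        (((hasDerivAt_const x (1:ℝ)).sub (hasDerivAt_id x)).mul_const sY)
      simp at this; exact this.congr_deriv (by ring)
    have hlog := hlin.log (ne_of_gt (hm x hx))
    have h2' : HasDerivAt (fun η : ℝ => η / 2 * Real.log sX) (Real.log sX / 2) x := by
      simpa [div_eq_mul_inv, mul_assoc, mul_comm, mul_left_comm] using
        (((hasDerivAt_id x).div_const 2).mul_const (Real.log sX))
    have h3' : HasDerivAt (fun η : ℝ => (1 - η) / 2 * Real.log τ1)
        ((-1) / 2 * Real.log τ1) x := by
      have := (((hasDerivAt_const x (1:ℝ)).sub (hasDerivAt_id x)).div_const 2).mul_const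
        (Real.log τ1)
      simpa using this
    have := ((hlog.const_mul ((1:ℝ)/2)).sub h2').sub h3'
    exact this
  have hneg : ∀ x ∈ Set.Ioo (0:ℝ) 1,
      (1/2) * ((sX - sY) / (x * sX + (1 - x) * sY))
        - Real.log sX / 2 - (-1) / 2 * Real.log τ1 < 0 := by
    intro x hx
    have hlt : Real.log τ1 < Real.log sX := Real.log_lt_log h1 hsX
    have hfrac : (sX - sY) / (x * sX + (1 - x) * sY) < 0 :=
      div_neg_of_neg_of_pos (by linarith) (hm x hx)
    linarith
  have hconv : Convex ℝ (Set.Ioo (0:ℝ) 1) := convex_Ioo 0 1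
  apply StrictAntiOn.mono (s := Set.Ioo (0:ℝ) 1) ?_ le_rfl
  apply strictAntiOn_of_deriv_neg hconv
  · exact fun x hx => (hderiv x hx).differentiableAt.continuousAt.continuousWithinAt
  · intro x hx
    rw [interior_Ioo] at hx
    rw [(hderiv x hx).deriv]
    exact hneg x hx
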